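/- Let (v,x) of type (α;β) have normal basis v_{i,j}, and suppose β_l = β_{l+1} for some l < ℓ(α). Let V_1 be the span of the v_{i,j} with i ≠ l, l+1 together with all vectors x^m(v_{l,α_l+β_l} + v_{l+1,α_{l+1}+β_l}), m ≥ 0, and let V_2 be the span of {v_{l+1,j} : all j}. Then V = V_1 ⊕ V_2, both summands are nonzero and x-stable, and v ∈ V_1. -/

import Mathlib

/-- For a normal basis `b ⟨i,j⟩` of `(v,x)` of type `(α;β)` with
`β l = β (l+1)` and `l + 1 < ℓ(α)` (so `α (l+1) > 0`), let `V₁` be the span of the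
basis vectors in rows `i ≠ l, l+1` together with the vectors
`x^m (b ⟨l, α l + β l⟩ + b ⟨l+1, α (l+1) + β l⟩)` (top boxes of rows `l`, `l+1`) for all
`m ≥ 0`, and `V₂` the span of row `l+1`.  Then `V = V₁ ⊕ V₂`, both summands are nonzero
and `x`-stable, and `v ∈ V₁`. -/
theorem decomposition_when_beta_parts_equal
    (F : Type) [Field F] (V : Type) [AddCommGroup V] [Module F V] [FiniteDimensional F V]
    (k : ℕ) (α β : ℕ → ℕ) (hα : Antitone α) (hβ : Antitone β)
    (hrow : ∀ i : Fin k, 0 < α i + β i)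
    (b : Module.Basis (Σ i : Fin k, Fin (α i + β i)) F V)
    (x : Module.End F V)
    (hx : ∀ p : Σ i : Fin k, Fin (α i + β i), x (b p) =
      if _ : (p.2 : ℕ) = 0 then 0
      else b ⟨p.1, ⟨(p.2 : ℕ) - 1, lt_of_le_of_lt (Nat.sub_le _ _) p.2.2⟩⟩)
    (v : V)
    (hv : v = ∑ i : Fin k,
      if h : 0 < α i then b ⟨i, ⟨α i - 1, by omega⟩⟩ else 0)
    (l : ℕ) (hl : l + 1 < k) (heq : β l = β (l + 1)) (hne : 0 < α (l + 1))
    (V₁ V₂ : Submodule F V)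
    (hV₁ : V₁ = Submodule.span F
      ({w : V | ∃ p : Σ i : Fin k, Fin (α i + β i),
          w = b p ∧ (p.1 : ℕ) ≠ l ∧ (p.1 : ℕ) ≠ l + 1}
        ∪ {w : V | ∃ m : ℕ, w = (x ^ m)
            (b ⟨⟨l, by omega⟩, ⟨α l + β l - 1,
                by simp only [Fin.val_mk]; have h1 : α (l + 1) ≤ α l := hα (by omega); omega⟩⟩
             + b ⟨⟨l + 1, hl⟩, ⟨α (l + 1) + β l - 1, by simp only [Fin.val_mk]; omega⟩⟩)}))
    (hV₂ : V₂ = Submodule.span F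
      (Set.range fun j : Fin (α (l + 1) + β (l + 1)) => b ⟨⟨l + 1, hl⟩, j⟩)) :
    IsCompl V₁ V₂ ∧ V₁ ≠ ⊥ ∧ V₂ ≠ ⊥
    ∧ (∀ w ∈ V₁, x w ∈ V₁) ∧ (∀ w ∈ V₂, x w ∈ V₂) ∧ v ∈ V₁ := by
  have hαle : α (l + 1) ≤ α l := hα (by omega)
  have hlk : l < k := by omega
  -- helper for basis index congruence
  have bcongr : ∀ (i : Fin k) (j j' : ℕ) (hj : j < α i + β i) (hj' : j' < α i + β i),
      j = j' → b ⟨i, ⟨j, hj⟩⟩ = b ⟨i, ⟨j', hj'⟩⟩ := by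
    rintro i j j' hj hj' rfl; rfl
  -- action of powers of x on the basis
  have hxm : ∀ (m : ℕ) (p : Σ i : Fin k, Fin (α i + β i)), (x ^ m) (b p) =
      if (p.2 : ℕ) < m then 0
      else b ⟨p.1, ⟨(p.2 : ℕ) - m, lt_of_le_of_lt (Nat.sub_le _ _) p.2.2⟩⟩ := by
    intro m
    induction m with
    | zero =>
      intro p
      simp
    | succ m ih =>
      intro p
      rw [pow_succ, Module.End.mul_apply, hx]
      split
      · rename_i h0
        rw [map_zero, if_pos (by omega)]
      · rename_i h0
        rw [ih]
        simp only [Fin.val_mk]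
        by_cases hc : (p.2 : ℕ) < m + 1
        · rw [if_pos (by omega), if_pos hc]
        · rw [if_neg (by omega), if_neg hc]
          exact bcongr _ _ _ _ _ (by omega)
  -- the nilpotent map n and the unipotent change of basis
  let f : (Σ i : Fin k, Fin (α i + β i)) → V := fun p =>
    if h : (p.1 : ℕ) = l ∧ (α l + β l) - (α (l + 1) + β (l + 1)) ≤ (p.2 : ℕ) then
      b ⟨⟨l + 1, hl⟩, ⟨(p.2 : ℕ) - ((α l + β l) - (α (l + 1) + β (l + 1))), by
        have h3 : (p.2 : ℕ) < α l + β l := by rw [← h.1]; exact p.2.2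
        show (p.2 : ℕ) - ((α l + β l) - (α (l + 1) + β (l + 1))) < α (l + 1) + β (l + 1)
        omega⟩⟩
    else 0
  let n : V →ₗ[F] V := b.constr F f
  have hnb : ∀ p, n (b p) = f p := fun p => b.constr_basis F f p
  have hnn : ∀ w : V, n (n w) = 0 := by
    have h0 : (n ∘ₗ n) = 0 := by
      apply b.ext
      intro p
      simp only [LinearMap.comp_apply, LinearMap.zero_apply, hnb]
      simp only [f]
      split
      · rw [hnb]
        simp only [f]
        rw [dif_neg]
        rintro ⟨h1, -⟩
        have : l + 1 = l := h1
        omega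
      · exact map_zero n
    intro w
    have := LinearMap.ext_iff.mp h0 w
    simpa using this
  let e : V ≃ₗ[F] V := LinearEquiv.ofLinear (LinearMap.id + n) (LinearMap.id - n)
    (by
      apply LinearMap.ext; intro w
      simp [map_sub, hnn, sub_add_cancel])
    (by
      apply LinearMap.ext; intro w
      simp [map_sub, hnn, sub_add_cancel])
  let b' := b.map e
  have hb' : ∀ p, b' p = b p + f p := by
    intro p
    simp only [b', Module.Basis.map_apply, e, LinearEquiv.ofLinear_apply, LinearMap.add_apply,
      LinearMap.id_apply, hnb]
  have hbrow : ∀ p, (p.1 : ℕ) ≠ l → b' p = b p := by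
    intro p hp
    rw [hb']
    simp only [f]
    rw [dif_neg, add_zero]
    rintro ⟨h1, -⟩
    exact hp h1
  have b'congr : ∀ (i : Fin k) (j j' : ℕ) (hj : j < α i + β i) (hj' : j' < α i + β i),
      j = j' → b' ⟨i, ⟨j, hj⟩⟩ = b' ⟨i, ⟨j', hj'⟩⟩ := by
    rintro i j j' hj hj' rfl; rfl
  -- the key computation for the vectors u_m
  have hwl : (α l + β l - 1) < α (⟨l, hlk⟩ : Fin k) + β (⟨l, hlk⟩ : Fin k) := by
    show α l + β l - 1 < α l + β l; omega
  have hwl1 : (α (l + 1) + β l - 1) < α (⟨l + 1, hl⟩ : Fin k) + β (⟨l + 1, hl⟩ : Fin k) := by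
    show α (l + 1) + β l - 1 < α (l + 1) + β (l + 1); omega
  have hu : ∀ m : ℕ,
      (x ^ m) (b ⟨⟨l, hlk⟩, ⟨α l + β l - 1, hwl⟩⟩ + b ⟨⟨l + 1, hl⟩, ⟨α (l + 1) + β l - 1, hwl1⟩⟩)
        = if h : m < α l + β l then
            b' ⟨⟨l, hlk⟩, ⟨α l + β l - 1 - m, by show α l + β l - 1 - m < α l + β l; omega⟩⟩
          else 0 := by
    intro m
    rw [map_add, hxm, hxm]
    simp only [Fin.val_mk]
    by_cases h1 : m < α l + β l
    · rw [dif_pos h1, if_neg (by omega), hb']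
      simp only [f]
      split_ifs with hc1 hc2 hc3
      · exfalso; obtain ⟨-, h3⟩ := hc2; omega
      · rfl
      · exact congrArg₂ (· + ·) rfl (bcongr _ _ _ _ _ (by omega))
      · exfalso
        apply hc3
        exact ⟨trivial, by omega⟩
    · rw [dif_neg h1, if_pos (by omega), if_pos (by omega), add_zero]
  -- index sets
  have hS : (Set.univ : Set (Σ i : Fin k, Fin (α i + β i))) =
      {p | (p.1 : ℕ) ≠ l + 1} ∪ {p | (p.1 : ℕ) = l + 1} := by
    ext p; simp [em']
  -- V₂ as a span of part of b'
  have hbL1 : ∀ j : Fin (α (l + 1) + β (l + 1)), b' ⟨⟨l + 1, hl⟩, j⟩ = b ⟨⟨l + 1, hl⟩, j⟩ := by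
    intro j
    apply hbrow
    show l + 1 ≠ l; omega
  have hspan2 : V₂ = Submodule.span F (b' '' {p | (p.1 : ℕ) = l + 1}) := by
    rw [hV₂]
    congr 1
    ext w
    constructor
    · rintro ⟨j, rfl⟩
      exact ⟨⟨⟨l + 1, hl⟩, j⟩, rfl, hbL1 j⟩
    · rintro ⟨⟨i, j⟩, hp, rfl⟩
      have : i = ⟨l + 1, hl⟩ := Fin.ext hp
      subst this
      exact ⟨j, (hbL1 j).symm⟩
  -- V₁ as a span of the complementary part of b'
  have hspan1 : V₁ = Submodule.span F (b' '' {p | (p.1 : ℕ) ≠ l + 1}) := by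
    rw [hV₁]
    apply le_antisymm
    · rw [Submodule.span_le]
      rintro w (⟨p, rfl, hp1, hp2⟩ | ⟨m, rfl⟩)
      · exact Submodule.subset_span ⟨p, hp2, hbrow p hp1⟩
      · rw [hu m]
        split
        · exact Submodule.subset_span ⟨_, (by show l ≠ l + 1; omega), rfl⟩
        · exact Submodule.zero_mem _
    · rw [Submodule.span_le]
      rintro w ⟨⟨i, j⟩, hp, rfl⟩
      by_cases hil : (i : ℕ) = l
      · have : i = ⟨l, hlk⟩ := Fin.ext hil
        subst this
        have hj : (j : ℕ) < α l + β l := j.2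
        apply Submodule.subset_span
        right
        refine ⟨α l + β l - 1 - (j : ℕ), ?_⟩
        rw [hu]
        rw [dif_pos (by omega)]
        refine Eq.symm ?_
        obtain ⟨jv, hjv⟩ := j
        have hjv' : jv < α l + β l := hjv
        exact b'congr _ _ _ _ _ (by simp only [Fin.val_mk]; omega)
      · apply Submodule.subset_span
        left
        exact ⟨⟨i, j⟩, hbrow _ hil, hil, hp⟩
  -- IsCompl
  have hcompl : IsCompl V₁ V₂ := by
    constructor
    · rw [hspan1, hspan2]
      exact b'.linearIndependent.disjoint_span_image
        (Set.disjoint_left.mpr fun p h1 h2 => h1 h2)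
    · rw [codisjoint_iff, hspan1, hspan2, ← Submodule.span_union, ← Set.image_union, ← hS,
        Set.image_univ, b'.span_eq]
  refine ⟨hcompl, ?_, ?_, ?_, ?_, ?_⟩
  · -- V₁ ≠ ⊥
    rw [Submodule.ne_bot_iff]
    refine ⟨b' ⟨⟨l, hlk⟩, ⟨0, hrow _⟩⟩, ?_, b'.ne_zero _⟩
    rw [hspan1]
    exact Submodule.subset_span ⟨_, (by show l ≠ l + 1; omega), rfl⟩
  · -- V₂ ≠ ⊥
    rw [Submodule.ne_bot_iff]
    refine ⟨b ⟨⟨l + 1, hl⟩, ⟨0, hrow _⟩⟩, ?_, b.ne_zero _⟩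
    rw [hV₂]
    exact Submodule.subset_span ⟨_, rfl⟩
  · -- V₁ is x-stable
    intro w hw
    have hmap : Submodule.map x V₁ ≤ V₁ := by
      conv_lhs => rw [hV₁]
      rw [Submodule.map_span, Submodule.span_le]
      rintro _ ⟨w', (⟨p, rfl, hp1, hp2⟩ | ⟨m, rfl⟩), rfl⟩
      · rw [hV₁, hx]
        split
        · exact Submodule.zero_mem _
        · exact Submodule.subset_span (Or.inl ⟨_, rfl, hp1, hp2⟩)
      · rw [hV₁]
        apply Submodule.subset_span
        right
        refine ⟨m + 1, ?_⟩
        rw [pow_succ']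
        rfl
    exact hmap ⟨w, hw, rfl⟩
  · -- V₂ is x-stable
    intro w hw
    have hmap : Submodule.map x V₂ ≤ V₂ := by
      conv_lhs => rw [hV₂]
      rw [Submodule.map_span, Submodule.span_le]
      rintro _ ⟨w', ⟨j, rfl⟩, rfl⟩
      rw [hV₂, hx]
      split
      · exact Submodule.zero_mem _
      · exact Submodule.subset_span ⟨_, rfl⟩
    exact hmap ⟨w, hw, rfl⟩
  · -- v ∈ V₁
    rw [hv, hV₁]
    have hL1mem : (⟨l + 1, hl⟩ : Fin k) ∈ (Finset.univ.erase (⟨l, hlk⟩ : Fin k)) := by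
      rw [Finset.mem_erase]
      exact ⟨by simp [Fin.ext_iff], Finset.mem_univ _⟩
    rw [← Finset.sum_erase_add _ _ (Finset.mem_univ (⟨l, hlk⟩ : Fin k)),
      ← Finset.sum_erase_add _ _ hL1mem, add_assoc]
    apply Submodule.add_mem
    · -- terms of rows ≠ l, l+1
      apply Submodule.sum_mem
      intro i hi
      rw [Finset.mem_erase, Finset.mem_erase] at hi
      obtain ⟨hi1, hi2, -⟩ := hi
      split
      · apply Submodule.subset_span
        left
        refine ⟨_, rfl, ?_, ?_⟩
        · intro hc; exact hi2 (Fin.ext hc)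
        · intro hc; exact hi1 (Fin.ext hc)
      · exact Submodule.zero_mem _
    · -- the rows l and l+1 terms combine to u_{β l}
      apply Submodule.subset_span
      right
      refine ⟨β l, ?_⟩
      rw [hu (β l), dif_pos (show β l < α l + β l from by omega), hb']
      simp only [f, Fin.val_mk]
      split_ifs with h1 h2 h3
      · exact (add_comm _ _).trans
          (congrArg₂ (· + ·) (bcongr _ _ _ _ _ (by omega)) (bcongr _ _ _ _ _ (by omega)))
      · exact absurd ⟨trivial, by omega⟩ h2
      · exact absurd (by omega : 0 < α l) h1
      · exact absurd (by omega : 0 < α l) h1
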